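/- Let R = ℂ[t^α | 0 < α ∈ ℝ] and let M = R/tR be the quotient of R by the ideal tR = {t·r : r ∈ R} (M has basis t^α for α ∈ (0,1]). Then M is a smooth R-module: the canonical map R ⊗_R M → M is an isomorphism. -/

import Mathlib

open TensorProduct LinearMap

/-- The additive semigroup of positive real exponents. -/
abbrev PosReal := {x : ℝ // 0 < x}

/-- `R = ℂ[t^α | 0 < α ∈ ℝ]`. -/
abbrev Rpos := AddMonoidAlgebra ℂ PosReal

/-- The element `t = t^1`. -/
noncomputable def tElt : Rpos := AddMonoidAlgebra.single ⟨1, one_pos⟩ 1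

/-- The ideal `tR = {t·r : r ∈ R}` (as a ℂ-subspace, it is spanned by the products). -/
noncomputable def tIdeal : Submodule ℂ Rpos :=
  Submodule.span ℂ (Set.range fun r : Rpos => tElt * r)

/-- `M = R/tR`. -/
noncomputable abbrev Mqt := Rpos ⧸ tIdeal

/-- The bar differential `R ⊗ R ⊗ M → R ⊗ M` for a module structure given by a
bilinear action map `act`. -/
noncomputable def barDM (act : Rpos →ₗ[ℂ] Mqt →ₗ[ℂ] Mqt) :
    (Rpos ⊗[ℂ] (Rpos ⊗[ℂ] Mqt)) →ₗ[ℂ] Rpos ⊗[ℂ] Mqt :=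
  (rTensor Mqt (mul' ℂ Rpos)) ∘ₗ (TensorProduct.assoc ℂ Rpos Rpos Mqt).symm.toLinearMap
    - lTensor Rpos (TensorProduct.lift act)

namespace SmoothAux

/-- coefficient extraction -/
noncomputable def coeff (y : Rpos) (β : PosReal) : ℂ := y.coeff β

lemma coeff_add (x y : Rpos) (β : PosReal) : coeff (x + y) β = coeff x β + coeff y β :=
  Finsupp.add_apply x.coeff y.coeff β

lemma coeff_smul (c : ℂ) (y : Rpos) (β : PosReal) : coeff (c • y) β = c * coeff y β :=
  Finsupp.smul_apply c y.coeff β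

lemma coeff_zero (β : PosReal) : coeff 0 β = 0 := by simp [coeff]

lemma ext_coeff {x y : Rpos} (h : ∀ β, coeff x β = coeff y β) : x = y := AddMonoidAlgebra.ext (Finsupp.ext h)

lemma coeff_single (α β : PosReal) (c : ℂ) [Decidable (α = β)] :
    coeff (AddMonoidAlgebra.single α c) β = if α = β then c else 0 := by
  simp only [coeff, AddMonoidAlgebra.coeff_single]; exact Finsupp.single_apply

lemma single_mul_single' (α β : PosReal) (c d : ℂ) :
    AddMonoidAlgebra.single α c * AddMonoidAlgebra.single β d
      = AddMonoidAlgebra.single (α + β) (c * d) :=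
  AddMonoidAlgebra.single_mul_single _ _ _ _

lemma coeff_single_mul_add (α β : PosReal) (c : ℂ) (y : Rpos) :
    coeff (AddMonoidAlgebra.single α c * y) (α + β) = c * coeff y β :=
  AddMonoidAlgebra.coeff_single_mul_eq_mul_coeff (x := y) (r := c) (m := α) (m₁ := α + β) β fun a _ =>
    ⟨fun h => add_left_cancel h, fun h => by rw [h]⟩

lemma coeff_single_mul_le (α : PosReal) (c : ℂ) (y : Rpos) (β : PosReal)
    (h : β.1 ≤ α.1) : coeff (AddMonoidAlgebra.single α c * y) β = 0 := by
  apply AddMonoidAlgebra.coeff_single_mul_of_forall_add_ne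
  intro d hd
  have : β.1 = α.1 + d.1 := (congrArg Subtype.val hd).symm
  have := d.2
  linarith

lemma single_mul_injective (α : PosReal) {y : Rpos}
    (h : AddMonoidAlgebra.single α (1 : ℂ) * y = 0) : y = 0 := by
  apply ext_coeff
  intro β
  have := congrArg (fun z => coeff z (α + β)) h
  simpa [coeff_single_mul_add, coeff_zero] using this

lemma mem_tIdeal_iff {y : Rpos} :
    y ∈ tIdeal ↔ ∀ β : PosReal, β.1 ≤ 1 → coeff y β = 0 := by
  constructor
  · intro hy β hβ
    induction hy using Submodule.span_induction with
    | mem x hx =>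
      obtain ⟨r, rfl⟩ := hx
      exact coeff_single_mul_le _ _ _ _ hβ
    | zero => exact coeff_zero β
    | add a b _ _ ha hb => rw [coeff_add, ha, hb, add_zero]
    | smul c a _ ha => rw [coeff_smul, ha, mul_zero]
  · intro hy
    have hsum : y = y.coeff.sum (fun α c => AddMonoidAlgebra.single α c) :=
      (AddMonoidAlgebra.sum_coeff_single y).symm
    rw [hsum]
    refine Submodule.sum_mem _ fun β hβ => ?_
    have hβ1 : 1 < β.1 := by
      by_contra h
      exact (Finsupp.mem_support_iff.mp hβ) (hy β (le_of_not_gt h))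
    have hpos : (0:ℝ) < β.1 - 1 := by linarith
    have heq : AddMonoidAlgebra.single β (coeff y β)
        = tElt * AddMonoidAlgebra.single ⟨β.1 - 1, hpos⟩ (coeff y β) := by
      rw [tElt, single_mul_single', one_mul]
      congr 1
      ext
      show β.1 = 1 + (β.1 - 1)
      ring
    show AddMonoidAlgebra.single β (coeff y β) ∈ tIdeal
    rw [heq]
    exact Submodule.subset_span ⟨_, rfl⟩

lemma mkQ_single_zero (β : PosReal) (c : ℂ) (h : 1 < β.1) :
    tIdeal.mkQ (AddMonoidAlgebra.single β c) = 0 := by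
  rw [Submodule.mkQ_apply, Submodule.Quotient.mk_eq_zero, mem_tIdeal_iff]
  intro γ hγ
  classical
  rw [coeff_single]
  have : β ≠ γ := fun e => by rw [e] at h; linarith
  simp [this]

variable (act : Rpos →ₗ[ℂ] Mqt →ₗ[ℂ] Mqt)

lemma barDM_tmul (r s : Rpos) (m : Mqt) :
    barDM act (r ⊗ₜ (s ⊗ₜ m)) = (r * s) ⊗ₜ m - r ⊗ₜ (act s m) := by
  simp [barDM, TensorProduct.assoc_symm_tmul, mul'_apply]

variable (hact : ∀ (r x : Rpos), act r (tIdeal.mkQ x) = tIdeal.mkQ (r * x))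

include hact in
lemma act_mul (r s : Rpos) (m : Mqt) : act (r * s) m = act r (act s m) := by
  obtain ⟨x, rfl⟩ := tIdeal.mkQ_surjective m
  rw [hact, hact, hact, mul_assoc]

include hact in
lemma liftact_barD_zero (x : Rpos ⊗[ℂ] (Rpos ⊗[ℂ] Mqt)) :
    TensorProduct.lift act (barDM act x) = 0 := by
  induction x using TensorProduct.induction_on with
  | zero => simp
  | add a b ha hb => rw [map_add, map_add, ha, hb, add_zero]
  | tmul r y =>
    induction y using TensorProduct.induction_on with
    | zero => simp
    | add a b ha hb => rw [tmul_add, map_add, map_add, ha, hb, add_zero]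
    | tmul s m =>
      rw [barDM_tmul, map_sub]
      simp [act_mul act hact]

include hact in
lemma liftact_range_zero {x : Rpos ⊗[ℂ] Mqt} (hx : x ∈ LinearMap.range (barDM act)) :
    TensorProduct.lift act x = 0 := by
  obtain ⟨w, rfl⟩ := hx
  exact liftact_barD_zero act hact w

/-- key reduction: `t^(ε+α) c ⊗ m ≡ t^ε ⊗ (t^α c) m`. -/
lemma key_mem (ε α : PosReal) (c : ℂ) (m : Mqt) :
    AddMonoidAlgebra.single (ε + α) c ⊗ₜ[ℂ] m
      - AddMonoidAlgebra.single ε (1:ℂ) ⊗ₜ[ℂ] (act (AddMonoidAlgebra.single α c) m)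
      ∈ LinearMap.range (barDM act) := by
  refine ⟨AddMonoidAlgebra.single ε (1:ℂ) ⊗ₜ (AddMonoidAlgebra.single α c ⊗ₜ m), ?_⟩
  rw [barDM_tmul, AddMonoidAlgebra.single_mul_single, one_mul]

include hact in
lemma single_tmul_mem (ε α : PosReal) (c : ℂ) (h : 1 < ε.1 + α.1) :
    AddMonoidAlgebra.single ε (1:ℂ) ⊗ₜ[ℂ] tIdeal.mkQ (AddMonoidAlgebra.single α c)
      ∈ LinearMap.range (barDM act) := by
  have hα := α.2; have hε := ε.2
  set δv : ℝ := if 1 ≤ α.1 then ε.1 / 2 else (1 - α.1 + ε.1) / 2 with hδ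
  have h1 : 0 < δv := by
    rw [hδ]; split
    · linarith
    · rename_i hh; push_neg at hh; linarith
  have h2 : δv < ε.1 := by
    rw [hδ]; split
    · linarith
    · rename_i hh; push_neg at hh; linarith
  have h3 : 1 < δv + α.1 := by
    rw [hδ]; split
    · rename_i hh; linarith
    · rename_i hh; push_neg at hh; linarith
  have hsplit : ε = (⟨ε.1 - δv, by linarith⟩ : PosReal) + ⟨δv, h1⟩ := by
    ext; show ε.1 = ε.1 - δv + δv; ring
  have hk := key_mem act (⟨ε.1 - δv, by linarith⟩ : PosReal) ⟨δv, h1⟩ (1:ℂ)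
      (tIdeal.mkQ (AddMonoidAlgebra.single α c))
  rw [← hsplit, hact, AddMonoidAlgebra.single_mul_single, one_mul] at hk
  rw [mkQ_single_zero _ _ (by exact h3 : 1 < ((⟨δv, h1⟩ : PosReal) + α).1),
    tmul_zero, sub_zero] at hk
  exact hk

include hact in
lemma step_B (ε : PosReal) (m : Mqt)
    (h : act (AddMonoidAlgebra.single ε (1:ℂ)) m = 0) :
    AddMonoidAlgebra.single ε (1:ℂ) ⊗ₜ[ℂ] m ∈ LinearMap.range (barDM act) := by
  classical
  obtain ⟨y, rfl⟩ := tIdeal.mkQ_surjective m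
  set y₁ : Rpos := AddMonoidAlgebra.ofCoeff (y.coeff.filter (fun α => 1 < ε.1 + α.1)) with hy₁
  set y₂ : Rpos := AddMonoidAlgebra.ofCoeff (y.coeff.filter (fun α => ¬ 1 < ε.1 + α.1)) with hy₂
  have hy12 : y₁ + y₂ = y := AddMonoidAlgebra.ext (Finsupp.filter_pos_add_filter_neg y.coeff _)
  have hymem : AddMonoidAlgebra.single ε (1:ℂ) * y ∈ tIdeal := by
    rw [hact] at h
    rwa [Submodule.mkQ_apply, Submodule.Quotient.mk_eq_zero] at h
  have hy2zero : y₂ = 0 := by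
    apply single_mul_injective ε
    apply ext_coeff; intro β
    rw [coeff_zero]
    by_cases hβε : β.1 ≤ ε.1
    · exact coeff_single_mul_le _ _ _ _ hβε
    · push_neg at hβε
      have hγpos : (0:ℝ) < β.1 - ε.1 := by linarith
      set γ : PosReal := ⟨β.1 - ε.1, hγpos⟩ with hγ
      have hβeq : β = ε + γ := by ext; show β.1 = ε.1 + (β.1 - ε.1); ring
      rw [hβeq, coeff_single_mul_add, one_mul]
      by_cases h1 : 1 < ε.1 + γ.1
      · show (Finsupp.filter _ y.coeff) γ = 0
        exact Finsupp.filter_apply_neg _ _ (not_not_intro h1)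
      · have hfe : coeff y₂ γ = coeff y γ := Finsupp.filter_apply_pos (fun α : PosReal => ¬ 1 < ε.1 + α.1) y.coeff h1
        rw [hfe]
        have hβ1 : β.1 ≤ 1 := by
          push_neg at h1
          have : ε.1 + γ.1 = β.1 := by show ε.1 + (β.1 - ε.1) = β.1; ring
          linarith
        have hz := (mem_tIdeal_iff.mp hymem) β hβ1
        rwa [hβeq, coeff_single_mul_add, one_mul] at hz
  have hy1 : tIdeal.mkQ y = tIdeal.mkQ y₁ := by rw [← hy12, hy2zero, add_zero]
  rw [hy1]
  set φ : Rpos →ₗ[ℂ] Rpos ⊗[ℂ] Mqt :=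
    (TensorProduct.mk ℂ Rpos Mqt (AddMonoidAlgebra.single ε (1:ℂ))) ∘ₗ tIdeal.mkQ with hφ
  have hmem : y₁ ∈ Submodule.comap φ (LinearMap.range (barDM act)) := by
    have hsum : y₁ = y₁.coeff.sum (fun α c => AddMonoidAlgebra.single α c) :=
      (AddMonoidAlgebra.sum_coeff_single y₁).symm
    rw [hsum]
    refine Submodule.sum_mem _ fun α hα => ?_
    have hcond : 1 < ε.1 + α.1 := by
      by_contra hc
      have h0 : coeff y₁ α = 0 := Finsupp.filter_apply_neg (fun α : PosReal => 1 < ε.1 + α.1) y.coeff hc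
      exact Finsupp.mem_support_iff.mp hα h0
    rw [Submodule.mem_comap]
    show AddMonoidAlgebra.single ε (1:ℂ)
        ⊗ₜ[ℂ] tIdeal.mkQ (AddMonoidAlgebra.single α (coeff y₁ α)) ∈ _
    exact single_tmul_mem act hact ε α _ hcond
  exact hmem

/-- reducibility property -/
def PropRed (x : Rpos ⊗[ℂ] Mqt) : Prop :=
  ∀ ε₀ : ℝ, 0 < ε₀ → ∃ (ε : PosReal) (m : Mqt), ε.1 < ε₀ ∧
    x - AddMonoidAlgebra.single ε (1:ℂ) ⊗ₜ[ℂ] m ∈ LinearMap.range (barDM act)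

lemma propRed_zero : PropRed act 0 := by
  intro ε₀ h
  refine ⟨⟨ε₀/2, by linarith⟩, 0, by simpa using by linarith, ?_⟩
  simp [tmul_zero]

lemma propRed_add {x y} (hx : PropRed act x) (hy : PropRed act y) :
    PropRed act (x + y) := by
  intro ε₀ hε₀
  obtain ⟨ε₁, m₁, hε₁, hm₁⟩ := hx ε₀ hε₀
  obtain ⟨ε₂, m₂, hε₂, hm₂⟩ := hy ε₁.1 ε₁.2
  have hδ : (0:ℝ) < ε₁.1 - ε₂.1 := by linarith
  set δ : PosReal := ⟨ε₁.1 - ε₂.1, hδ⟩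
  have hsplit : ε₁ = ε₂ + δ := by ext; show ε₁.1 = ε₂.1 + (ε₁.1 - ε₂.1); ring
  have hk := key_mem act ε₂ δ (1:ℂ) m₁
  rw [← hsplit] at hk
  refine ⟨ε₂, act (AddMonoidAlgebra.single δ (1:ℂ)) m₁ + m₂, by linarith, ?_⟩
  have hsum := add_mem (add_mem hm₁ hk) hm₂
  convert hsum using 1
  rw [tmul_add]
  abel

lemma propRed_single (α : PosReal) (c : ℂ) (m : Mqt) :
    PropRed act (AddMonoidAlgebra.single α c ⊗ₜ[ℂ] m) := by
  intro ε₀ hε₀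
  have hα := α.2
  have hεv : (0:ℝ) < min ε₀ α.1 / 2 := by
    have : (0:ℝ) < min ε₀ α.1 := lt_min hε₀ hα
    linarith
  set εv : ℝ := min ε₀ α.1 / 2 with hεvdef
  have h1 : εv < α.1 := by
    have := min_le_right ε₀ α.1
    rw [hεvdef]; linarith
  have h2 : εv < ε₀ := by
    have := min_le_left ε₀ α.1
    rw [hεvdef]; linarith
  set ε : PosReal := ⟨εv, hεv⟩
  set β : PosReal := ⟨α.1 - εv, by linarith⟩
  have hsplit : α = ε + β := by ext; show α.1 = εv + (α.1 - εv); ring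
  have hk := key_mem act ε β c m
  rw [← hsplit] at hk
  exact ⟨ε, act (AddMonoidAlgebra.single β c) m, h2, hk⟩

lemma propRed_all (x : Rpos ⊗[ℂ] Mqt) : PropRed act x := by
  induction x using TensorProduct.induction_on with
  | zero => exact propRed_zero act
  | add a b ha hb => exact propRed_add act ha hb
  | tmul r m =>
    have hsum : r = r.coeff.sum (fun α c => AddMonoidAlgebra.single α c) :=
      (AddMonoidAlgebra.sum_coeff_single r).symm
    rw [hsum, Finsupp.sum, TensorProduct.sum_tmul]
    refine Finset.sum_induction _ _ (fun a b ha hb => propRed_add act ha hb)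
      (propRed_zero act) ?_
    intro α _
    exact propRed_single act α _ m

include hact in
lemma ker_sub {x : Rpos ⊗[ℂ] Mqt} (hx : TensorProduct.lift act x = 0) :
    x ∈ LinearMap.range (barDM act) := by
  obtain ⟨ε, m, _, hmem⟩ := propRed_all act x 1 one_pos
  have h0 := liftact_range_zero act hact hmem
  rw [map_sub, hx, zero_sub, neg_eq_zero, lift.tmul] at h0
  have hB := step_B act hact ε m h0
  have hsum := add_mem hmem hB
  rwa [sub_add_cancel] at hsum

end SmoothAux

/-- `M = R/tR` is a smooth module over `R = ℂ[t^α | 0 < α ∈ ℝ]`: the canonical map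
`R ⊗_R M → M` is an isomorphism.  Here `act` is the quotient action of `R` on `M`. -/
theorem quotient_by_t_smooth (act : Rpos →ₗ[ℂ] Mqt →ₗ[ℂ] Mqt)
    (hact : ∀ (r x : Rpos), act r (tIdeal.mkQ x) = tIdeal.mkQ (r * x)) :
    ∀ f : ((Rpos ⊗[ℂ] Mqt) ⧸ LinearMap.range (barDM act)) →ₗ[ℂ] Mqt,
      f ∘ₗ (LinearMap.range (barDM act)).mkQ = TensorProduct.lift act →
      Function.Bijective f := by
  intro f hf
  have hfx : ∀ x, f ((LinearMap.range (barDM act)).mkQ x) = TensorProduct.lift act x :=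
    fun x => LinearMap.congr_fun hf x
  constructor
  · rw [injective_iff_map_eq_zero]
    intro q hq
    obtain ⟨x, rfl⟩ := Submodule.mkQ_surjective _ q
    have hx : TensorProduct.lift act x = 0 := by rw [← hfx x]; exact hq
    have hr := SmoothAux.ker_sub act hact hx
    rwa [Submodule.mkQ_apply, Submodule.Quotient.mk_eq_zero]
  · intro m
    suffices h : m ∈ LinearMap.range (TensorProduct.lift act) by
      obtain ⟨x, hx⟩ := h
      exact ⟨_, by rw [← hx, ← hfx x]⟩
    obtain ⟨y, rfl⟩ := tIdeal.mkQ_surjective m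
    have hmem : y ∈ Submodule.comap tIdeal.mkQ
        (LinearMap.range (TensorProduct.lift act)) := by
      have hsum : y = y.coeff.sum (fun α c => AddMonoidAlgebra.single α c) :=
        (AddMonoidAlgebra.sum_coeff_single y).symm
      rw [hsum]
      refine Submodule.sum_mem _ fun α hα => ?_
      rw [Submodule.mem_comap]
      have hhalf : (0:ℝ) < α.1 / 2 := by have := α.2; linarith
      set h2 : PosReal := ⟨α.1/2, hhalf⟩
      have hsplit : α = h2 + h2 := by ext; show α.1 = α.1/2 + α.1/2; ring
      refine ⟨AddMonoidAlgebra.single h2 (SmoothAux.coeff y α)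
          ⊗ₜ tIdeal.mkQ (AddMonoidAlgebra.single h2 (1:ℂ)), ?_⟩
      rw [lift.tmul, hact, AddMonoidAlgebra.single_mul_single, mul_one, ← hsplit]
      rfl
    exact hmem
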